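/- Let η_{m,0} be the unique (up to phase) unit-normalization-compatible vector in the zero-weight space of π_m = π_{(m,0,-m)} annihilated by π_m(X₂*), expanded in the Gelfand-Tsetlin basis as η_{m,0} = Σ_{j=0}^m c_{m,j} ξ_{m,j}. Suppose π_m(X₂*)ξ_{m,j} = (j/(2j+1)) ξ'_{m,j} + ((j+1)/(2j+1)) ξ'_{m,j+1}. Then the coefficients satisfy c_{m,j} = (-1)^j (2j+1) c_{m,0}, and if ‖η_{m,0}‖² = m!²(2m+1)! then |c_{m,0}| = 1/(m+1). -/

import Mathlib

lemma stmt16_sum_odd (n : ℕ) : ∑ j ∈ Finset.range n, (2*(j:ℝ)+1) = (n:ℝ)^2 := by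
  induction n with
  | zero => simp
  | succ k ih => rw [Finset.sum_range_succ, ih]; push_cast; ring

/-- Let `η_{m,0} = Σ_{j=0}^m c_{m,j} ξ_{m,j}` be a zero-weight vector of `π_{(m,0,-m)}`
annihilated by `π_m(X₂*)`, where
`π_m(X₂*)ξ_{m,j} = (j/(2j+1)) ξ'_{m,j} + ((j+1)/(2j+1)) ξ'_{m,j+1}` (with `ξ'_{m,0}`-term
vanishing and `ξ'_{m,m+1} = 0`), the `ξ_{m,j}` are mutually orthogonal with
`‖ξ_{m,j}‖² = m!²(2m+1)!/(2j+1)`, and the `ξ'_{m,j}` (`j = 1,…,m`) are linearly independent.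
Then `c_{m,j} = (-1)^j (2j+1) c_{m,0}`, and if `‖η_{m,0}‖² = m!²(2m+1)!` then
`|c_{m,0}| = 1/(m+1)`. -/
theorem stmt16 {V : Type*} [NormedAddCommGroup V] [InnerProductSpace ℂ V]
    (m : ℕ) (ξ ξ' : ℕ → V) (η : V) (c : ℕ → ℂ) (X2star : V →ₗ[ℂ] V)
    (hη : η = ∑ j ∈ Finset.range (m + 1), c j • ξ j)
    (hX2star : ∀ j : ℕ, j ≤ m →
      X2star (ξ j) = ((j : ℂ) / (2 * (j : ℂ) + 1)) • ξ' j
        + (((j : ℂ) + 1) / (2 * (j : ℂ) + 1)) • ξ' (j + 1))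
    (hξ'0 : ξ' 0 = 0) (hξ'top : ξ' (m + 1) = 0)
    (hindep : LinearIndependent ℂ (fun j : Fin m => ξ' ((j : ℕ) + 1)))
    (hann : X2star η = 0)
    (horth : ∀ i j : ℕ, i ≤ m → j ≤ m → i ≠ j → (inner ℂ (ξ i) (ξ j) : ℂ) = 0)
    (hnorm : ∀ j : ℕ, j ≤ m →
      ‖ξ j‖ ^ 2 = (Nat.factorial m : ℝ) ^ 2 * (Nat.factorial (2 * m + 1) : ℝ)
        / (2 * (j : ℝ) + 1))
    (hηnorm : ‖η‖ ^ 2 = (Nat.factorial m : ℝ) ^ 2 * (Nat.factorial (2 * m + 1) : ℝ)) :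
    (∀ j : ℕ, j ≤ m → c j = (-1 : ℂ) ^ j * (2 * (j : ℂ) + 1) * c 0) ∧
    ‖c 0‖ = 1 / ((m : ℝ) + 1) := by
  have h2 : ∀ k : ℕ, (2*(k:ℂ)+1) ≠ 0 := fun k => by
    exact_mod_cast Nat.cast_ne_zero (R:=ℂ).mpr (show 2*k+1 ≠ 0 by omega)
  -- Step 1: expand the annihilation equation
  have h0 : ∑ j ∈ Finset.range (m+1), c j • X2star (ξ j) = 0 := by
    rw [hη] at hann
    simpa [map_sum, map_smul] using hann
  have h1 : ∑ j ∈ Finset.range (m+1),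
      ((c j * ((j:ℂ) / (2*(j:ℂ)+1))) • ξ' j
        + (c j * (((j:ℂ)+1) / (2*(j:ℂ)+1))) • ξ' (j+1)) = 0 := by
    rw [← h0]
    refine Finset.sum_congr rfl fun j hj => ?_
    rw [hX2star j (Nat.lt_succ_iff.mp (Finset.mem_range.mp hj))]
    simp [smul_add, smul_smul]
  have hA : ∑ j ∈ Finset.range (m+1), (c j * ((j:ℂ) / (2*(j:ℂ)+1))) • ξ' j
      = ∑ j ∈ Finset.range m,
          (c (j+1) * (((j:ℂ)+1) / (2*((j:ℂ)+1)+1))) • ξ' (j+1) := by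
    rw [Finset.sum_range_succ']
    simp [hξ'0]
  have hB : ∑ j ∈ Finset.range (m+1), (c j * (((j:ℂ)+1) / (2*(j:ℂ)+1))) • ξ' (j+1)
      = ∑ j ∈ Finset.range m, (c j * (((j:ℂ)+1) / (2*(j:ℂ)+1))) • ξ' (j+1) := by
    rw [Finset.sum_range_succ, hξ'top, smul_zero, add_zero]
  have h3 : ∑ j ∈ Finset.range m,
      ((c (j+1) * (((j:ℂ)+1) / (2*((j:ℂ)+1)+1))
        + c j * (((j:ℂ)+1) / (2*(j:ℂ)+1))) • ξ' (j+1)) = 0 := by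
    rw [← h1, Finset.sum_add_distrib, hA, hB, ← Finset.sum_add_distrib]
    refine Finset.sum_congr rfl fun j hj => ?_
    rw [add_smul]
  have hcoef : ∀ k : ℕ, k < m →
      c (k+1) * (((k:ℂ)+1) / (2*((k:ℂ)+1)+1)) + c k * (((k:ℂ)+1) / (2*(k:ℂ)+1)) = 0 := by
    intro k hk
    have h4 : ∑ j : Fin m,
        ((c ((j:ℕ)+1) * ((((j:ℕ):ℂ)+1) / (2*(((j:ℕ):ℂ)+1)+1))
          + c (j:ℕ) * ((((j:ℕ):ℂ)+1) / (2*((j:ℕ):ℂ)+1))) • ξ' ((j:ℕ)+1)) = 0 := by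
      rw [← Finset.sum_range fun j =>
        ((c (j+1) * (((j:ℂ)+1) / (2*((j:ℂ)+1)+1))
          + c j * (((j:ℂ)+1) / (2*(j:ℂ)+1))) • ξ' (j+1))]
      exact h3
    exact Fintype.linearIndependent_iff.mp hindep _ h4 ⟨k, hk⟩
  -- recurrence (denominator-free form)
  have hrec : ∀ k : ℕ, k < m →
      (2*(k:ℂ)+1) * c (k+1) = -(2*(k:ℂ)+3) * c k := by
    intro k hk
    have h := hcoef k hk
    have hk1 : ((k:ℂ)+1) ≠ 0 := by
      exact_mod_cast Nat.cast_ne_zero (R:=ℂ).mpr (show k+1 ≠ 0 by omega)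
    have hk0 := h2 k
    have hk3' : (2*((k:ℂ)+1)+1) ≠ 0 := by
      intro hh; exact h2 (k+1) (by push_cast; linear_combination hh)
    field_simp at h
    apply mul_left_cancel₀ hk1
    linear_combination (2*(k:ℂ)+1)*(2*(k:ℂ)+3) * hcoef k hk - (2*(k:ℂ)+1) * c (k+1) * div_mul_cancel₀ ((k:ℂ)+1) hk3' - (2*(k:ℂ)+3) * c k * div_mul_cancel₀ ((k:ℂ)+1) hk0
  -- Part 1
  have hc : ∀ j : ℕ, j ≤ m → c j = (-1 : ℂ) ^ j * (2 * (j : ℂ) + 1) * c 0 := by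
    intro j
    induction j with
    | zero => intro _; simp
    | succ k ih =>
      intro hk
      have hk' : k < m := by omega
      apply mul_left_cancel₀ (h2 k)
      rw [hrec k hk', ih (by omega)]
      push_cast
      ring
  refine ⟨hc, ?_⟩
  -- Part 2: norm computation
  set M : ℝ := (Nat.factorial m : ℝ) ^ 2 * (Nat.factorial (2 * m + 1) : ℝ) with hM
  have hMpos : 0 < M := by positivity
  have hinner : (inner ℂ η η : ℂ)
      = ∑ j ∈ Finset.range (m+1), (((‖c j‖)^2 * (M / (2*(j:ℝ)+1)) : ℝ) : ℂ) := by
    rw [hη, inner_sum]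
    refine Finset.sum_congr rfl fun j hj => ?_
    have hjm : j ≤ m := Nat.lt_succ_iff.mp (Finset.mem_range.mp hj)
    rw [sum_inner]
    rw [Finset.sum_eq_single_of_mem j hj]
    · rw [inner_smul_left, inner_smul_right, inner_self_eq_norm_sq_to_K,
        ← mul_assoc, mul_comm ((starRingEnd ℂ) (c j)) (c j), Complex.mul_conj]
      norm_cast
      rw [hnorm j hjm, Complex.sq_norm]
      push_cast
      ring_nf
      exact mul_right_comm _ _ _
    · intro i hi hij
      rw [inner_smul_left, inner_smul_right,
        horth i j (Nat.lt_succ_iff.mp (Finset.mem_range.mp hi)) hjm hij]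
      ring
  have hre : ‖η‖^2 = ∑ j ∈ Finset.range (m+1), (‖c j‖)^2 * (M / (2*(j:ℝ)+1)) := by
    rw [← inner_self_eq_norm_sq (𝕜 := ℂ), hinner, ← Complex.ofReal_sum]
    exact RCLike.ofReal_re _
  have hsum : ∑ j ∈ Finset.range (m+1), (‖c j‖)^2 * (M / (2*(j:ℝ)+1))
      = (‖c 0‖)^2 * M * (((m:ℝ)+1)^2) := by
    have hterm : ∀ j ∈ Finset.range (m+1), (‖c j‖)^2 * (M / (2*(j:ℝ)+1))
        = (‖c 0‖)^2 * M * (2*(j:ℝ)+1) := by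
      intro j hj
      have hjm : j ≤ m := Nat.lt_succ_iff.mp (Finset.mem_range.mp hj)
      have habs : (‖c j‖)^2 = (2*(j:ℝ)+1)^2 * (‖c 0‖)^2 := by
        rw [hc j hjm, norm_mul, norm_mul, norm_pow]
        simp only [norm_neg, norm_one, one_pow, one_mul]
        rw [mul_pow]
        congr 1
        have he : (2*(j:ℂ)+1) = ((2*(j:ℝ)+1 : ℝ) : ℂ) := by push_cast; ring
        rw [he, Complex.norm_real, Real.norm_eq_abs, abs_of_pos (by positivity)]
      rw [habs]
      have hne : (2*(j:ℝ)+1) ≠ 0 := by positivity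
      field_simp
    rw [Finset.sum_congr rfl hterm, ← Finset.mul_sum, stmt16_sum_odd]
    push_cast
    ring
  rw [hre, hsum] at hηnorm
  have hm1 : (0:ℝ) < (m:ℝ)+1 := by positivity
  have key : (‖c 0‖)^2 * (((m:ℝ)+1)^2) = 1 := by
    apply mul_right_cancel₀ (ne_of_gt hMpos)
    linear_combination hηnorm
  have hsq : (‖c 0‖)^2 = (1/((m:ℝ)+1))^2 := by
    field_simp
    linear_combination key
  have hfac : (‖c 0‖ - 1/((m:ℝ)+1)) * (‖c 0‖ + 1/((m:ℝ)+1)) = 0 := by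
    linear_combination hsq
  rcases mul_eq_zero.mp hfac with h | h
  · linarith
  · have h1 : 0 ≤ ‖c 0‖ := norm_nonneg _
    have h2 : 0 < 1/((m:ℝ)+1) := by positivity
    linarith
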